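/- Let W := {(−√−q·(θ⌟Θ)_K, θ) : θ ∈ K ⊗_F U*} ⊆ V_K be the graph of the K-linear extension of the map U* → U, θ ↦ −√−q·(θ⌟Θ). Then W is a maximal isotropic subspace of V_K with respect to the K-bilinear extension of the hyperbolic form ⟨(w₁,θ₁),(w₂,θ₂)⟩ = θ₁(w₂) + θ₂(w₁), and W ∩ σ(W) = 0; consequently V_K = W ⊕ σ(W). -/
import Mathlib


/-!
Setup: `F` a field of characteristic zero, `q ∈ F` with `−q` not a square in `F`,
`K = F(√−q)` (a field `K ⊇ F` generated by an element `s` with `s² = −q`) with nontrivial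
`F`-automorphism `ι`; `U` a finite-dimensional `F`-vector space, `V := U × U*`,
`V_K := K ⊗[F] V`, `σ := ι ⊗ id`.  `Θ ∈ ∧²U` is nondegenerate, with contraction map
`c : U* → U`, `c θ = θ⌟Θ` (characterized by `ι (c θ) = θ⌟Θ` in `∧U`).
`W := {(−√−q·(θ⌟Θ)_K, θ)} ⊆ V_K` is the graph of the `K`-linear extension of
`θ ↦ −√−q·(θ⌟Θ)`, realized as the `K`-span of the vectors
`(−s)·(1 ⊗ (c θ, 0)) + 1 ⊗ (0, θ)`, `θ ∈ U*`.  `b_K` is the `K`-bilinear extension of the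
hyperbolic form `⟨(w₁,θ₁),(w₂,θ₂)⟩ = θ₁(w₂) + θ₂(w₁)`.
-/

open scoped TensorProduct

/-- The `ι`-semilinear automorphism `σ := ι ⊗ id_V` of `V_K = K ⊗[F] V`. -/
noncomputable def sigmaMap (F : Type*) [Field F] (K : Type*) [Field K] [Algebra F K]
    (V : Type*) [AddCommGroup V] [Module F V] (ι : K ≃ₐ[F] K) :
    K ⊗[F] V →ₗ[F] K ⊗[F] V :=
  TensorProduct.map ι.toLinearMap LinearMap.id

/-- The graph `W = {(−s·(θ⌟Θ)_K, θ) : θ ∈ K ⊗ U*} ⊆ V_K` of the `K`-linear extension of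
`θ ↦ −s·(c θ)`, realized as the `K`-span of its values on `1 ⊗ U*`. -/
noncomputable def Wgraph (F : Type*) [Field F] (K : Type*) [Field K] [Algebra F K] (s : K)
    (U : Type*) [AddCommGroup U] [Module F U] (c : Module.Dual F U →ₗ[F] U) :
    Submodule K (K ⊗[F] (U × Module.Dual F U)) :=
  Submodule.span K (Set.range fun θ : Module.Dual F U =>
    (-s) • ((1 : K) ⊗ₜ[F] ((c θ, 0) : U × Module.Dual F U))
      + (1 : K) ⊗ₜ[F] (((0 : U), θ) : U × Module.Dual F U))

section Aux

variable (F : Type*) [Field F] (K : Type*) [Field K] [Algebra F K]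
  (U : Type*) [AddCommGroup U] [Module F U] (c : Module.Dual F U →ₗ[F] U)

/-- The K-linear map whose range is the graph. -/
noncomputable def Lmap (t : K) :
    K ⊗[F] Module.Dual F U →ₗ[K] K ⊗[F] (U × Module.Dual F U) :=
  t • LinearMap.baseChange K ((LinearMap.inl F U (Module.Dual F U)).comp c)
    + LinearMap.baseChange K (LinearMap.inr F U (Module.Dual F U))

theorem Lmap_tmul (t : K) (x : K) (θ : Module.Dual F U) :
    Lmap F K U c t (x ⊗ₜ[F] θ)
      = t • (x ⊗ₜ[F] ((c θ, 0) : U × Module.Dual F U))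
        + x ⊗ₜ[F] (((0 : U), θ) : U × Module.Dual F U) := by
  simp [Lmap, LinearMap.baseChange_tmul]

theorem Wgraph_eq_range (s : K) :
    Wgraph F K s U c = LinearMap.range (Lmap F K U c (-s)) := by
  apply le_antisymm
  · rw [Wgraph, Submodule.span_le]
    rintro _ ⟨θ, rfl⟩
    exact ⟨(1 : K) ⊗ₜ[F] θ, by rw [Lmap_tmul]⟩
  · rintro _ ⟨u, rfl⟩
    induction u using TensorProduct.induction_on with
    | zero => simpa using Submodule.zero_mem _
    | tmul x θ =>
        have hx : Lmap F K U c (-s) (x ⊗ₜ[F] θ)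
            = x • (Lmap F K U c (-s) ((1 : K) ⊗ₜ[F] θ)) := by
          rw [← map_smul]
          congr 1
          rw [TensorProduct.smul_tmul', smul_eq_mul, mul_one]
        rw [hx, Lmap_tmul]
        exact Submodule.smul_mem _ _ (Submodule.subset_span ⟨θ, rfl⟩)
    | add u v hu hv => rw [map_add]; exact Submodule.add_mem _ hu hv

theorem snd_Lmap (t : K) (u : K ⊗[F] Module.Dual F U) :
    LinearMap.baseChange K (LinearMap.snd F U (Module.Dual F U)) (Lmap F K U c t u) = u := by
  induction u using TensorProduct.induction_on with
  | zero => simp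
  | tmul x θ => simp [Lmap_tmul]
  | add u v hu hv => rw [map_add, map_add, hu, hv]

theorem fst_Lmap (t : K) (u : K ⊗[F] Module.Dual F U) :
    LinearMap.baseChange K (LinearMap.fst F U (Module.Dual F U)) (Lmap F K U c t u)
      = t • LinearMap.baseChange K c u := by
  induction u using TensorProduct.induction_on with
  | zero => simp
  | tmul x θ => simp [Lmap_tmul]
  | add u v hu hv => rw [map_add, map_add, hu, hv, map_add, smul_add]

theorem Lmap_injective (t : K) : Function.Injective (Lmap F K U c t) := by
  intro u v h
  have h2 := congrArg (LinearMap.baseChange K (LinearMap.snd F U (Module.Dual F U))) h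
  rwa [snd_Lmap, snd_Lmap] at h2

theorem baseChange_inj {A B : Type*} [AddCommGroup A] [Module F A] [AddCommGroup B]
    [Module F B] (f : A →ₗ[F] B) (hf : Function.Injective f) :
    Function.Injective (LinearMap.baseChange K f) := by
  obtain ⟨g, hg⟩ := f.exists_leftInverse_of_injective (LinearMap.ker_eq_bot.2 hf)
  have hid : ∀ w, LinearMap.baseChange K g (LinearMap.baseChange K f w) = w := by
    intro w
    rw [← LinearMap.comp_apply, ← LinearMap.baseChange_comp, hg, LinearMap.baseChange_id,
      LinearMap.id_apply]
  intro u v h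
  rw [← hid u, ← hid v, h]

theorem sigma_surj (V : Type*) [AddCommGroup V] [Module F V] (ι : K ≃ₐ[F] K) :
    Function.Surjective (sigmaMap F K V ι) := by
  intro y
  induction y using TensorProduct.induction_on with
  | zero => exact ⟨0, map_zero _⟩
  | tmul x v => exact ⟨ι.symm x ⊗ₜ[F] v, by simp [sigmaMap]⟩
  | add a b ha hb =>
      obtain ⟨a', ha⟩ := ha
      obtain ⟨b', hb⟩ := hb
      exact ⟨a' + b', by rw [map_add, ha, hb]⟩

theorem sigma_Lmap (s : K) (ι : K ≃ₐ[F] K) (hιs : ι s = -s)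
    (u : K ⊗[F] Module.Dual F U) :
    sigmaMap F K (U × Module.Dual F U) ι (Lmap F K U c (-s) u)
      = Lmap F K U c s (sigmaMap F K (Module.Dual F U) ι u) := by
  induction u using TensorProduct.induction_on with
  | zero => simp
  | tmul x θ =>
      simp only [Lmap_tmul, sigmaMap, map_add, TensorProduct.smul_tmul', smul_eq_mul,
        TensorProduct.map_tmul, AlgEquiv.toLinearMap_apply, LinearMap.id_apply, map_mul,
        map_neg, hιs, neg_neg, neg_mul]
  | add u v hu hv => rw [map_add, map_add, hu, hv, map_add, map_add]

end Aux

section Aux2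

variable (F : Type*) [Field F] (K : Type*) [Field K] [Algebra F K]
  (U : Type*) [AddCommGroup U] [Module F U] (c : Module.Dual F U →ₗ[F] U)

theorem map_sigma_W (s : K) (ι : K ≃ₐ[F] K) (hιs : ι s = -s) :
    ((Wgraph F K s U c).restrictScalars F).map (sigmaMap F K (U × Module.Dual F U) ι)
      = (Wgraph F K (-s) U c).restrictScalars F := by
  rw [Wgraph_eq_range, Wgraph_eq_range, neg_neg]
  ext x
  simp only [Submodule.mem_map, Submodule.restrictScalars_mem, LinearMap.mem_range]
  constructor
  · rintro ⟨y, ⟨u, rfl⟩, rfl⟩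
    exact ⟨sigmaMap F K _ ι u, (sigma_Lmap F K U c s ι hιs u).symm⟩
  · rintro ⟨v, rfl⟩
    obtain ⟨u, rfl⟩ := sigma_surj F K (Module.Dual F U) ι v
    exact ⟨Lmap F K U c (-s) u, ⟨u, rfl⟩, sigma_Lmap F K U c s ι hιs u⟩

theorem restrictScalars_inf' {M : Type*} [AddCommGroup M] [Module F M] [Module K M]
    [IsScalarTower F K M] (A B : Submodule K M) :
    (A ⊓ B).restrictScalars F = A.restrictScalars F ⊓ B.restrictScalars F := rfl

theorem restrictScalars_sup' {M : Type*} [AddCommGroup M] [Module F M] [Module K M]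
    [IsScalarTower F K M] (A B : Submodule K M) :
    A.restrictScalars F ⊔ B.restrictScalars F = (A ⊔ B).restrictScalars F := by
  apply le_antisymm
  · exact sup_le (fun x hx => Submodule.mem_sup_left hx) fun x hx => Submodule.mem_sup_right hx
  · intro x hx
    obtain ⟨a, ha, b, hb, rfl⟩ := Submodule.mem_sup.1 hx
    exact Submodule.mem_sup.2 ⟨a, ha, b, hb, rfl⟩

theorem inter_bot (s : K) (hcnd : Function.Injective c) (h2s : (2 : K) * s ≠ 0) :
    LinearMap.range (Lmap F K U c (-s)) ⊓ LinearMap.range (Lmap F K U c s) = ⊥ := by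
  rw [eq_bot_iff]
  rintro x ⟨⟨u, hu⟩, ⟨v, hv⟩⟩
  have huv : u = v := by
    have h2 := congrArg (LinearMap.baseChange K (LinearMap.snd F U (Module.Dual F U)))
      (hu.trans hv.symm)
    rwa [snd_Lmap, snd_Lmap] at h2
  have hfst : (-s) • LinearMap.baseChange K c u = s • LinearMap.baseChange K c u := by
    have h3 := congrArg (LinearMap.baseChange K (LinearMap.fst F U (Module.Dual F U)))
      (hu.trans hv.symm)
    rwa [fst_Lmap, fst_Lmap, ← huv] at h3
  have h4 : ((2 : K) * s) • LinearMap.baseChange K c u = 0 := by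
    have hh : s • LinearMap.baseChange K c u + s • LinearMap.baseChange K c u = 0 := by
      nth_rewrite 1 [← hfst]
      module
    rw [two_mul, add_smul, hh]
  have h5 : LinearMap.baseChange K c u = 0 := (smul_eq_zero.1 h4).resolve_left h2s
  have h6 : u = 0 := baseChange_inj F K c hcnd (by rw [h5, map_zero])
  have : x = 0 := by rw [← hu, h6, map_zero]
  simp [this]

end Aux2

theorem rs_inf (F : Type*) [Field F] (K : Type*) [Field K] [Algebra F K]
    (M : Type*) [AddCommGroup M] [Module F M] [Module K M] [IsScalarTower F K M]
    (A B : Submodule K M) (h : A ⊓ B = ⊥) :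
    A.restrictScalars F ⊓ B.restrictScalars F = ⊥ := by
  have h2 : (A ⊓ B).restrictScalars F = (⊥ : Submodule K M).restrictScalars F := by rw [h]
  rw [Submodule.restrictScalars_bot] at h2
  exact h2

theorem rs_sup (F : Type*) [Field F] (K : Type*) [Field K] [Algebra F K]
    (M : Type*) [AddCommGroup M] [Module F M] [Module K M] [IsScalarTower F K M]
    (A B : Submodule K M) (h : A ⊔ B = ⊤) :
    A.restrictScalars F ⊔ B.restrictScalars F = ⊤ := by
  have h2 : (A ⊔ B).restrictScalars F = ⊤ := by
    rw [h]; exact (Submodule.restrictScalars_eq_top_iff F K M).2 rfl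
  rw [← h2]
  apply le_antisymm
  · exact sup_le (fun x hx => Submodule.mem_sup_left hx) fun x hx => Submodule.mem_sup_right hx
  · intro x hx
    obtain ⟨a, ha, b, hb, rfl⟩ := Submodule.mem_sup.1 hx
    exact Submodule.mem_sup.2 ⟨a, ha, b, hb, rfl⟩

theorem iota_s (F : Type*) [Field F] (q : F)
    (K : Type*) [Field K] [Algebra F K] (s : K) (hs : s ^ 2 = algebraMap F K (-q))
    (hgen : Algebra.adjoin F ({s} : Set K) = ⊤)
    (ι : K ≃ₐ[F] K) (hι : ι ≠ AlgEquiv.refl) : ι s = -s := by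
  have h2 : (ι s) ^ 2 = s ^ 2 := by
    rw [hs, ← ι.commutes (-q), ← map_pow, hs]
  have hz : (ι s - s) * (ι s + s) = 0 := by ring_nf; linear_combination h2
  rcases mul_eq_zero.1 hz with h | h
  · exfalso
    have hss : ι s = s := sub_eq_zero.1 h
    have heq : ι.toAlgHom = AlgHom.id F K := by
      apply AlgHom.ext_of_adjoin_eq_top hgen
      intro x hx
      rcases hx with rfl
      simpa using hss
    apply hι
    ext x
    exact congrArg (fun f => f x) heq
  · exact eq_neg_of_add_eq_zero_left h

theorem skew_c (F : Type*) [Field F]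
    (U : Type*) [AddCommGroup U] [Module F U]
    (Θ : ExteriorAlgebra F U)
    (c : Module.Dual F U →ₗ[F] U)
    (hc : ∀ θ : Module.Dual F U,
      ExteriorAlgebra.ι F (c θ) =
        CliffordAlgebra.contractLeft (Q := (0 : QuadraticForm F U)) θ Θ)
    (θ θ' : Module.Dual F U) : θ (c θ') + θ' (c θ) = 0 := by
  have h1 : algebraMap F (ExteriorAlgebra F U) (θ (c θ')) =
      CliffordAlgebra.contractLeft (Q := (0 : QuadraticForm F U)) θ
        (CliffordAlgebra.contractLeft (Q := (0 : QuadraticForm F U)) θ' Θ) := by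
    rw [← hc θ', ← CliffordAlgebra.contractLeft_ι]
  have h2 : algebraMap F (ExteriorAlgebra F U) (θ' (c θ)) =
      CliffordAlgebra.contractLeft (Q := (0 : QuadraticForm F U)) θ'
        (CliffordAlgebra.contractLeft (Q := (0 : QuadraticForm F U)) θ Θ) := by
    rw [← hc θ, ← CliffordAlgebra.contractLeft_ι]
  have h3 := CliffordAlgebra.contractLeft_contractLeft (d := θ + θ')
    (Q := (0 : QuadraticForm F U)) Θ
  simp only [map_add, LinearMap.add_apply,
    CliffordAlgebra.contractLeft_contractLeft] at h3
  have key : algebraMap F (ExteriorAlgebra F U) (θ (c θ') + θ' (c θ)) = 0 := by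
    rw [map_add, h1, h2]
    linear_combination (norm := abel) h3
  apply (ExteriorAlgebra.algebraMap_leftInverse (R := F) U).injective
  rw [key, map_zero]

set_option maxHeartbeats 2000000 in
set_option synthInstance.maxHeartbeats 1000000 in
/-- `W` is a maximal isotropic subspace of `V_K` for the `K`-bilinear
extension of the hyperbolic form, and `W ∩ σ(W) = 0`; consequently `V_K = W ⊕ σ(W)`. -/
theorem stmt16 (F : Type*) [Field F] [CharZero F] (q : F) (hq : ∀ x : F, x ^ 2 ≠ -q)
    (K : Type*) [Field K] [Algebra F K] (s : K) (hs : s ^ 2 = algebraMap F K (-q))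
    (hgen : Algebra.adjoin F ({s} : Set K) = ⊤)
    (ι : K ≃ₐ[F] K) (hι : ι ≠ AlgEquiv.refl)
    (U : Type*) [AddCommGroup U] [Module F U] [FiniteDimensional F U]
    (Θ : ExteriorAlgebra F U)
    (hΘ : Θ ∈ (LinearMap.range (ExteriorAlgebra.ι F : U →ₗ[F] ExteriorAlgebra F U)) ^ 2)
    (c : Module.Dual F U →ₗ[F] U)
    (hc : ∀ θ : Module.Dual F U,
      ExteriorAlgebra.ι F (c θ) =
        CliffordAlgebra.contractLeft (Q := (0 : QuadraticForm F U)) θ Θ)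
    (hcnd : Function.Injective c)
    (bK : K ⊗[F] (U × Module.Dual F U) →ₗ[K] K ⊗[F] (U × Module.Dual F U) →ₗ[K] K)
    (hbK : ∀ (x y : K) (v w : U × Module.Dual F U),
      bK (x ⊗ₜ[F] v) (y ⊗ₜ[F] w) = x * y * algebraMap F K (v.2 w.1 + w.2 v.1)) :
    (∀ a ∈ Wgraph F K s U c, ∀ b ∈ Wgraph F K s U c, bK a b = 0)
    ∧ Module.rank K (Wgraph F K s U c) = (Module.finrank F U : Cardinal)
    ∧ ((Wgraph F K s U c).restrictScalars F)
        ⊓ ((Wgraph F K s U c).restrictScalars F).map (sigmaMap F K _ ι) = ⊥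
    ∧ ((Wgraph F K s U c).restrictScalars F)
        ⊔ ((Wgraph F K s U c).restrictScalars F).map (sigmaMap F K _ ι) = ⊤ := by
  haveI : CharZero K := charZero_of_injective_algebraMap (algebraMap F K).injective
  have hs0 : s ≠ 0 := by
    intro h
    apply hq 0
    have h0 : algebraMap F K (-q) = algebraMap F K 0 := by
      rw [← hs, h, map_zero]; ring
    have hq0 : -q = 0 := (algebraMap F K).injective h0
    rw [hq0]; ring
  have h2s : (2 : K) * s ≠ 0 := mul_ne_zero two_ne_zero hs0
  have hιs : ι s = -s := iota_s F q K s hs hgen ι hι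
  have hskew := skew_c F U Θ c hc
  -- the generators
  set g : Module.Dual F U → K ⊗[F] (U × Module.Dual F U) := fun θ =>
    (-s) • ((1 : K) ⊗ₜ[F] ((c θ, 0) : U × Module.Dual F U))
      + (1 : K) ⊗ₜ[F] (((0 : U), θ) : U × Module.Dual F U) with hg_def
  have hWdef : Wgraph F K s U c = Submodule.span K (Set.range g) := rfl
  -- isotropy on generators
  have hgen2 : ∀ θ θ' : Module.Dual F U, bK (g θ) (g θ') = 0 := by
    intro θ θ'
    have halg : algebraMap F K (θ (c θ')) + algebraMap F K (θ' (c θ)) = 0 := by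
      rw [← map_add, hskew θ θ', map_zero]
    simp only [hg_def, map_add, map_smul, LinearMap.add_apply, LinearMap.smul_apply,
      hbK, smul_eq_mul]
    simp only [LinearMap.zero_apply, Prod.fst, Prod.snd, map_zero, mul_one, one_mul]
    linear_combination (-s) * halg
  -- part 1: isotropy
  have part1 : ∀ a ∈ Wgraph F K s U c, ∀ b ∈ Wgraph F K s U c, bK a b = 0 := by
    intro a ha b hb
    have ha' : ∀ θ' : Module.Dual F U, bK a (g θ') = 0 := by
      intro θ'
      have hle : Wgraph F K s U c ≤ LinearMap.ker (bK.flip (g θ')) := by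
        rw [hWdef, Submodule.span_le]
        rintro _ ⟨θ, rfl⟩
        exact hgen2 θ θ'
      exact hle ha
    have hle : Wgraph F K s U c ≤ LinearMap.ker (bK a) := by
      rw [hWdef, Submodule.span_le]
      rintro _ ⟨θ', rfl⟩
      exact ha' θ'
    exact hle hb
  -- ranks
  have hWr : Wgraph F K s U c = LinearMap.range (Lmap F K U c (-s)) :=
    Wgraph_eq_range F K U c s
  have hWr' : Wgraph F K (-s) U c = LinearMap.range (Lmap F K U c s) := by
    rw [Wgraph_eq_range F K U c (-s), neg_neg]
  have part2 : Module.rank K (Wgraph F K s U c) = (Module.finrank F U : Cardinal) := by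
    have h := Module.finrank_eq_rank K (K ⊗[F] Module.Dual F U)
    rw [hWr, rank_range_of_injective _ (Lmap_injective F K U c (-s)), ← h,
      Module.finrank_baseChange, Subspace.dual_finrank_eq]
  -- intersection over K
  have hinfK : Wgraph F K s U c ⊓ Wgraph F K (-s) U c = ⊥ := by
    rw [hWr, hWr']
    exact inter_bot F K U c s hcnd h2s
  have hmap := map_sigma_W F K U c s ι hιs
  have part3 : ((Wgraph F K s U c).restrictScalars F)
      ⊓ ((Wgraph F K s U c).restrictScalars F).map (sigmaMap F K _ ι) = ⊥ := by
    rw [hmap]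
    exact rs_inf F K (K ⊗[F] (U × Module.Dual F U)) _ _ hinfK
  -- sup over K, constructively
  have hcsurj : Function.Surjective c :=
    (LinearMap.injective_iff_surjective_of_finrank_eq_finrank
      (Subspace.dual_finrank_eq)).1 hcnd
  have hsupK : Wgraph F K s U c ⊔ Wgraph F K (-s) U c = ⊤ := by
    rw [hWr, hWr', eq_top_iff]
    intro x _
    induction x using TensorProduct.induction_on with
    | zero => exact Submodule.zero_mem _
    | add a b ha hb => exact Submodule.add_mem _ (ha trivial) (hb trivial)
    | tmul k v =>
        rcases v with ⟨w, θv⟩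
        have hv : (k ⊗ₜ[F] ((w, θv) : U × Module.Dual F U))
            = k ⊗ₜ[F] ((w, 0) : U × Module.Dual F U)
              + k ⊗ₜ[F] (((0 : U), θv) : U × Module.Dual F U) := by
          rw [← TensorProduct.tmul_add, Prod.mk_add_mk, add_zero, zero_add]
        rw [hv]
        apply Submodule.add_mem
        · obtain ⟨θ, hθ⟩ := hcsurj w
          have key : ((2 : K) * s) • (k ⊗ₜ[F] ((w, 0) : U × Module.Dual F U))
              = Lmap F K U c (-s) ((-k) ⊗ₜ[F] θ) + Lmap F K U c s (k ⊗ₜ[F] θ) := by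
            rw [Lmap_tmul, Lmap_tmul, hθ, TensorProduct.neg_tmul, TensorProduct.neg_tmul]
            module
          have hmem : ((2 : K) * s) • (k ⊗ₜ[F] ((w, 0) : U × Module.Dual F U))
              ∈ LinearMap.range (Lmap F K U c (-s)) ⊔ LinearMap.range (Lmap F K U c s) := by
            rw [key]
            apply Submodule.add_mem
            · exact Submodule.mem_sup_left ⟨(-k) ⊗ₜ[F] θ, rfl⟩
            · exact Submodule.mem_sup_right ⟨k ⊗ₜ[F] θ, rfl⟩
          have h' := Submodule.smul_mem _ ((2 : K) * s)⁻¹ hmem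
          rwa [smul_smul, inv_mul_cancel₀ h2s, one_smul] at h'
        · have key : (2 : K) • (k ⊗ₜ[F] (((0 : U), θv) : U × Module.Dual F U))
              = Lmap F K U c (-s) (k ⊗ₜ[F] θv) + Lmap F K U c s (k ⊗ₜ[F] θv) := by
            rw [Lmap_tmul, Lmap_tmul]
            module
          have hmem : (2 : K) • (k ⊗ₜ[F] (((0 : U), θv) : U × Module.Dual F U))
              ∈ LinearMap.range (Lmap F K U c (-s)) ⊔ LinearMap.range (Lmap F K U c s) := by
            rw [key]
            apply Submodule.add_mem
            · exact Submodule.mem_sup_left ⟨k ⊗ₜ[F] θv, rfl⟩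
            · exact Submodule.mem_sup_right ⟨k ⊗ₜ[F] θv, rfl⟩
          have h' := Submodule.smul_mem _ ((2 : K))⁻¹ hmem
          rwa [smul_smul, inv_mul_cancel₀ two_ne_zero, one_smul] at h'
  have part4 : ((Wgraph F K s U c).restrictScalars F)
      ⊔ ((Wgraph F K s U c).restrictScalars F).map (sigmaMap F K _ ι) = ⊤ := by
    rw [hmap]
    exact rs_sup F K (K ⊗[F] (U × Module.Dual F U)) _ _ hsupK
  exact ⟨part1, part2, part3, part4⟩
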